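/- Let T be a nonempty binary tree of size n with left subtree T_L and right subtree T_R, and for a binary tree U let S_U be the set of interval-posets P_{[U',U]} of Tamari intervals whose upper tree is U (i.e., over all U' ≤ U). Then S_T is the disjoint union of the sets 𝔹(I_L,I_R) over all pairs I_L ∈ S_{T_L} and I_R ∈ S_{T_R}. -/

import Mathlib

/-- Planar binary trees: empty, or a node with a left and a right subtree. -/
inductive BinTree : Type where
  | leaf : BinTree
  | node : BinTree → BinTree → BinTree
  deriving DecidableEq

namespace BinTree

/-- Size: number of internal nodes. -/
def size : BinTree → ℕ
  | leaf => 0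
  | node l r => l.size + r.size + 1

/-- `sub T o a b` : in the binary-search-tree labelling of `T` shifted by `o`
(its labels are `o+1, …, o+T.size`), the node labelled `a` lies in the subtree
rooted at the node labelled `b`, i.e. `a ⊴_T b`. -/
def sub : BinTree → ℕ → ℕ → ℕ → Prop
  | leaf, _, _, _ => False
  | node l r, o, a, b =>
      (b = o + l.size + 1 ∧ o + 1 ≤ a ∧ a ≤ o + l.size + r.size + 1) ∨
      l.sub o a b ∨ r.sub (o + l.size + 1) a b

/-- One right rotation, applied at any position of the tree. -/
inductive Rot : BinTree → BinTree → Prop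
  | base (A B C : BinTree) : Rot (node (node A B) C) (node A (node B C))
  | left {l l' : BinTree} (r : BinTree) : Rot l l' → Rot (node l r) (node l' r)
  | right (l : BinTree) {r r' : BinTree} : Rot r r' → Rot (node l r) (node l r')

end BinTree

/-- Tamari order: reflexive-transitive closure of right rotation. -/
def tamariLE : BinTree → BinTree → Prop := Relation.ReflTransGen BinTree.Rot

/-- `incRel T a c` : `a` is below `c` in the initial forest `inc T`. -/
def incRel (T : BinTree) (a c : ℕ) : Prop := a < c ∧ T.sub 0 a c

/-- `decRel T c a` : `c` is below `a` in the final forest `dec T`. -/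
def decRel (T : BinTree) (c a : ℕ) : Prop := a < c ∧ T.sub 0 c a

/-- An interval-poset: a partial order on `{1, …, n}` in which, whenever
`a ⊴ c` and `a < c`, all `a < b < c` satisfy `b ⊴ c`, and whenever `c ⊴ a` and
`a < c`, all `a < b < c` satisfy `b ⊴ a`.  `rel x y` means "`x` is below `y`". -/
structure IntervalPoset : Type where
  n : ℕ
  rel : ℕ → ℕ → Prop
  supp : ∀ a b, rel a b → 1 ≤ a ∧ a ≤ n ∧ 1 ≤ b ∧ b ≤ n
  refl : ∀ a, 1 ≤ a → a ≤ n → rel a a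
  antisymm : ∀ a b, rel a b → rel b a → a = b
  trans : ∀ a b c, rel a b → rel b c → rel a c
  incCond : ∀ a b c, rel a c → a < b → b < c → rel b c
  decCond : ∀ a b c, rel c a → a < b → b < c → rel b a

/-- The partial order on `{1, …, n}` generated by a family `r` of relations. -/
def genClos (n : ℕ) (r : ℕ → ℕ → Prop) : ℕ → ℕ → Prop :=
  fun a b => (a = b ∧ 1 ≤ a ∧ a ≤ n) ∨ Relation.TransGen r a b

/-- The relation of the interval-poset `P_{[T1,T2]}` of a Tamari interval: the
partial order on `{1, …, n}` generated by the relations of `dec T1` together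
with those of `inc T2`. -/
def pairRel (n : ℕ) (T1 T2 : BinTree) : ℕ → ℕ → Prop :=
  genClos n (fun x y => decRel T1 x y ∨ incRel T2 x y)

/-- The composition `𝔹(I1, I2)` of two interval-posets: all interval-posets
`I` of size `I1.n + I2.n + 1` whose induced subposet on `{1, …, k1}` is `I1`,
whose induced subposet on `{k1+2, …, k1+k2+1}` is `I2` shifted by `k1+1`, with
`i ⊴ k1+1` for all `i ≤ k1` and `k1+1 ⊴ j` for no `j > k1+1`. -/
def comp (I1 I2 : IntervalPoset) : Set IntervalPoset :=
  {I | I.n = I1.n + I2.n + 1 ∧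
    (∀ a b, 1 ≤ a → a ≤ I1.n → 1 ≤ b → b ≤ I1.n → (I.rel a b ↔ I1.rel a b)) ∧
    (∀ a b, 1 ≤ a → a ≤ I2.n → 1 ≤ b → b ≤ I2.n →
      (I.rel (a + I1.n + 1) (b + I1.n + 1) ↔ I2.rel a b)) ∧
    (∀ i, 1 ≤ i → i ≤ I1.n → I.rel i (I1.n + 1)) ∧
    (∀ j, I1.n + 1 < j → ¬ I.rel (I1.n + 1) j)}

/-- `S_U` : the interval-posets of Tamari intervals with upper tree `U`. -/
def upperSet (U : BinTree) : Set IntervalPoset :=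
  {P | P.n = U.size ∧ ∃ U' : BinTree, U'.size = U.size ∧ tamariLE U' U ∧
    P.rel = pairRel U.size U' U}


namespace TamariAux

open BinTree

lemma rot_size {t t' : BinTree} (h : Rot t t') : t.size = t'.size := by
  induction h with
  | base A B C => simp [size]; omega
  | left r h ih => simp [size, ih]
  | right l h ih => simp [size, ih]

lemma tamariLE_size {t t' : BinTree} (h : tamariLE t t') : t.size = t'.size := by
  induction h with
  | refl => rfl
  | tail _ h2 ih => exact ih.trans (rot_size h2)

lemma tamariLE_node {l l' r r' : BinTree} (hl : tamariLE l l') (hr : tamariLE r r') :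
    tamariLE (node l r) (node l' r') := by
  have h1 : tamariLE (node l r) (node l' r) :=
    Relation.ReflTransGen.lift (fun x => node x r) (fun a b h => Rot.left r h) _ _ hl
  have h2 : tamariLE (node l' r) (node l' r') :=
    Relation.ReflTransGen.lift (fun x => node l' x) (fun a b h => Rot.right l' h) _ _ hr
  exact h1.trans h2

/-- graft `X` at the leftmost leaf of `R` -/
def plant (X : BinTree) : BinTree → BinTree
  | BinTree.leaf => X
  | BinTree.node l r => BinTree.node (plant X l) r

@[simp] lemma plant_leaf (X : BinTree) : plant X BinTree.leaf = X := rfl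

@[simp] lemma plant_node (X l r : BinTree) :
    plant X (BinTree.node l r) = BinTree.node (plant X l) r := rfl

lemma plant_size (X R : BinTree) : (plant X R).size = X.size + R.size := by
  induction R with
  | leaf => simp [size]
  | node l r ih => simp [size, ih]; omega

lemma tamariLE_plant (X W : BinTree) (R : BinTree) :
    tamariLE (plant (node X W) R) (node X (plant W R)) := by
  induction R with
  | leaf => simp; exact Relation.ReflTransGen.refl
  | node l r ih =>
    simp only [plant_node]
    have h1 : tamariLE (node (plant (node X W) l) r) (node (node X (plant W l)) r) :=
      tamariLE_node ih Relation.ReflTransGen.refl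
    exact h1.tail (Rot.base X (plant W l) r)

lemma sub_bounds {T : BinTree} : ∀ {o a b : ℕ}, T.sub o a b →
    o + 1 ≤ a ∧ a ≤ o + T.size ∧ o + 1 ≤ b ∧ b ≤ o + T.size := by
  induction T with
  | leaf => intro o a b h; exact absurd h (by simp [sub])
  | node l r ihl ihr =>
    intro o a b h
    rcases h with ⟨hb, ha⟩ | h | h
    · have hbl : o + 1 ≤ b := by omega
      simp [size]; omega
    · have := ihl h; simp [size]; omega
    · have := ihr h; simp [size]; omega

lemma sub_shift_iff (T : BinTree) : ∀ (o s a b : ℕ),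
    T.sub (o + s) (a + s) (b + s) ↔ T.sub o a b := by
  induction T with
  | leaf => intro o s a b; simp [sub]
  | node l r ihl ihr =>
    intro o s a b
    show (b + s = o + s + l.size + 1 ∧ _ ∧ _) ∨ _ ∨ _ ↔ _
    constructor
    · rintro (⟨h1, h2, h3⟩ | h | h)
      · exact Or.inl ⟨by omega, by omega, by omega⟩
      · exact Or.inr (Or.inl ((ihl o s a b).1 h))
      · refine Or.inr (Or.inr ?_)
        have : o + s + l.size + 1 = (o + l.size + 1) + s := by omega
        rw [this] at h
        exact (ihr (o + l.size + 1) s a b).1 h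
    · rintro (⟨h1, h2, h3⟩ | h | h)
      · exact Or.inl ⟨by omega, by omega, by omega⟩
      · exact Or.inr (Or.inl ((ihl o s a b).2 h))
      · refine Or.inr (Or.inr ?_)
        have : o + s + l.size + 1 = (o + l.size + 1) + s := by omega
        rw [this]
        exact (ihr (o + l.size + 1) s a b).2 h

lemma sub_shift {T : BinTree} {a b : ℕ} (s : ℕ) (h : T.sub 0 a b) :
    T.sub s (a + s) (b + s) := by
  have := (sub_shift_iff T 0 s a b).2 h
  simpa using this

lemma sub_unshift {T : BinTree} {s a b : ℕ} (h : T.sub s a b) :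
    T.sub 0 (a - s) (b - s) ∧ s + 1 ≤ a ∧ s + 1 ≤ b := by
  have hb := sub_bounds h
  have ha' : a = (a - s) + s := by omega
  have hb' : b = (b - s) + s := by omega
  rw [ha', hb'] at h
  have : T.sub (0 + s) ((a-s) + s) ((b-s) + s) := by simpa using h
  exact ⟨(sub_shift_iff T 0 s _ _).1 this, by omega, by omega⟩

lemma plant_sub_of_left {X : BinTree} (R : BinTree) {o a b : ℕ} (h : X.sub o a b) :
    (plant X R).sub o a b := by
  induction R with
  | leaf => simpa using h
  | node l r ih => exact Or.inr (Or.inl ih)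

lemma plant_sub_left {X : BinTree} (R : BinTree) {o a b : ℕ}
    (h : (plant X R).sub o a b) (hb : b ≤ o + X.size) : X.sub o a b := by
  induction R with
  | leaf => simpa using h
  | node l r ih =>
    rcases h with ⟨h1, h2⟩ | h | h
    · have : (plant X l).size = X.size + l.size := plant_size X l
      omega
    · exact ih h
    · have := sub_bounds h
      have : (plant X l).size = X.size + l.size := plant_size X l
      omega

lemma plant_sub_of_right {X : BinTree} (R : BinTree) {o a b : ℕ}
    (h : R.sub (o + X.size) a b) : (plant X R).sub o a b := by
  induction R generalizing o with
  | leaf => exact absurd h (by simp [sub])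
  | node l r ih =>
    rcases h with ⟨h1, h2, h3⟩ | h | h
    · refine Or.inl ⟨?_, ?_, ?_⟩
      · rw [plant_size]; omega
      · omega
      · rw [plant_size]; simp [size] at *; omega
    · exact Or.inr (Or.inl (ih h))
    · refine Or.inr (Or.inr ?_)
      have : o + X.size + l.size + 1 = o + (plant X l).size + 1 := by rw [plant_size]; omega
      rw [this] at h
      exact h

lemma plant_sub_right {X : BinTree} (R : BinTree) {o a b : ℕ}
    (h : (plant X R).sub o a b) (ha : o + X.size < a) : R.sub (o + X.size) a b := by
  induction R with
  | leaf =>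
    simp only [plant_leaf] at h
    have := sub_bounds h; omega
  | node l r ih =>
    rcases h with ⟨h1, h2, h3⟩ | h | h
    · have hps : (plant X l).size = X.size + l.size := plant_size X l
      refine Or.inl ⟨by omega, by omega, ?_⟩
      simp [size] at *; omega
    · exact Or.inr (Or.inl (ih h))
    · refine Or.inr (Or.inr ?_)
      have hps : (plant X l).size = X.size + l.size := plant_size X l
      have : o + (plant X l).size + 1 = o + X.size + l.size + 1 := by omega
      rw [this] at h
      exact h



lemma genClos_diag {n : ℕ} {r : ℕ → ℕ → Prop} {a : ℕ} (h1 : 1 ≤ a) (h2 : a ≤ n) :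
    genClos n r a a := Or.inl ⟨rfl, h1, h2⟩

lemma genClos_single {n : ℕ} {r : ℕ → ℕ → Prop} {a b : ℕ} (h : r a b) :
    genClos n r a b := Or.inr (Relation.TransGen.single h)

lemma genClos_trans {n : ℕ} {r : ℕ → ℕ → Prop} {a b c : ℕ}
    (h1 : genClos n r a b) (h2 : genClos n r b c) : genClos n r a c := by
  rcases h1 with ⟨rfl, _⟩ | h1
  · exact h2
  · rcases h2 with ⟨rfl, _⟩ | h2
    · exact Or.inr h1
    · exact Or.inr (h1.trans h2)

lemma genClos_mono {n n' : ℕ} {r r' : ℕ → ℕ → Prop} (hn : n ≤ n')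
    (hr : ∀ x y, r x y → r' x y) {a b : ℕ} (h : genClos n r a b) : genClos n' r' a b := by
  rcases h with ⟨rfl, h1, h2⟩ | h
  · exact Or.inl ⟨rfl, h1, by omega⟩
  · exact Or.inr (Relation.TransGen.mono hr _ _ h)

lemma genClos_shift {n n' s : ℕ} {r r' : ℕ → ℕ → Prop} (hn : n + s ≤ n')
    (hr : ∀ x y, r x y → r' (x + s) (y + s)) {a b : ℕ} (h : genClos n r a b) :
    genClos n' r' (a + s) (b + s) := by
  rcases h with ⟨rfl, h1, h2⟩ | h
  · exact Or.inl ⟨rfl, by omega, by omega⟩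
  · refine Or.inr ?_
    induction h with
    | single h => exact Relation.TransGen.single (hr _ _ h)
    | tail _ h2 ih => exact ih.tail (hr _ _ h2)

lemma genClos_supp {n : ℕ} {r : ℕ → ℕ → Prop}
    (hr : ∀ x y, r x y → 1 ≤ x ∧ x ≤ n ∧ 1 ≤ y ∧ y ≤ n) {a b : ℕ}
    (h : genClos n r a b) : 1 ≤ a ∧ a ≤ n ∧ 1 ≤ b ∧ b ≤ n := by
  rcases h with ⟨rfl, h1, h2⟩ | h
  · exact ⟨h1, h2, h1, h2⟩
  · induction h with
    | single h => exact hr _ _ h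
    | tail _ h2 ih => have := hr _ _ h2; omega

lemma genClos_ind {n : ℕ} {r : ℕ → ℕ → Prop} {Φ : ℕ → ℕ → Prop}
    (hdiag : ∀ a, 1 ≤ a → a ≤ n → Φ a a)
    (hgen : ∀ x y, r x y → Φ x y)
    (htrans : ∀ x y z, Φ x y → Φ y z → Φ x z)
    {a b : ℕ} (h : genClos n r a b) : Φ a b := by
  rcases h with ⟨rfl, h1, h2⟩ | h
  · exact hdiag a h1 h2
  · induction h with
    | single h => exact hgen _ _ h
    | tail _ h2 ih => exact htrans _ _ _ ih (hgen _ _ h2)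

lemma pairRel_supp {n : ℕ} {T1 T2 : BinTree} (h1 : T1.size = n) (h2 : T2.size = n)
    {a b : ℕ} (h : pairRel n T1 T2 a b) : 1 ≤ a ∧ a ≤ n ∧ 1 ≤ b ∧ b ≤ n := by
  refine genClos_supp ?_ h
  rintro x y (⟨_, hs⟩ | ⟨_, hs⟩) <;> have := sub_bounds hs <;> omega

/-- `[1,k]` closed under subtrees cuts the left spine. -/
lemma spine_cut : ∀ (R1 : BinTree) (k : ℕ), k ≤ R1.size →
    (∀ a b, b ≤ k → R1.sub 0 a b → a ≤ k) →
    ∃ W R2, R1 = plant W R2 ∧ W.size = k := by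
  intro R1
  induction R1 with
  | leaf =>
    intro k hk _
    exact ⟨BinTree.leaf, BinTree.leaf, rfl, by simp [size] at hk ⊢; omega⟩
  | node l r ih =>
    intro k hk hcl
    by_cases hfull : k = (BinTree.node l r).size
    · exact ⟨BinTree.node l r, BinTree.leaf, rfl, hfull.symm⟩
    · have hkl : k ≤ l.size := by
        by_contra hgt
        push_neg at hgt
        have hroot : (BinTree.node l r).sub 0 (BinTree.node l r).size (l.size + 1) := by
          refine Or.inl ⟨by omega, ?_, ?_⟩ <;> simp [size] <;> omega
        have := hcl _ _ (by omega) hroot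
        simp [size] at *; omega
      obtain ⟨W, R2, hEq, hW⟩ := ih k hkl
        (fun a b hb hs => hcl a b hb (Or.inr (Or.inl hs)))
      exact ⟨W, BinTree.node R2 r, by rw [plant_node, hEq], hW⟩

lemma rot_inv {Y Z : BinTree} (h : Rot Y Z) : ∀ l r, Z = BinTree.node l r →
    (∃ B C, r = BinTree.node B C ∧ Y = BinTree.node (BinTree.node l B) C) ∨
    (∃ l0, Rot l0 l ∧ Y = BinTree.node l0 r) ∨
    (∃ r0, Rot r0 r ∧ Y = BinTree.node l r0) := by
  cases h with
  | base A B C =>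
    intro l r hE
    injection hE with h1 h2
    subst h1
    exact Or.inl ⟨B, C, h2.symm, rfl⟩
  | left r' h =>
    intro l r hE
    injection hE with h1 h2
    subst h1; subst h2
    exact Or.inr (Or.inl ⟨_, h, rfl⟩)
  | right l' h =>
    intro l r hE
    injection hE with h1 h2
    subst h1; subst h2
    exact Or.inr (Or.inr ⟨_, h, rfl⟩)

/-- pulling one rotation back through a `plant` decomposition -/
lemma rot_plant : ∀ (R : BinTree) (L W Y : BinTree),
    Rot Y (plant (BinTree.node L W) R) →
    ∃ L2 W2 R2, Y = plant (BinTree.node L2 W2) R2 ∧ L2.size = L.size ∧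
      tamariLE L2 L ∧ tamariLE (plant W2 R2) (plant W R) := by
  intro R
  induction R with
  | leaf =>
    intro L W Y h
    simp only [plant_leaf] at h
    rcases rot_inv h L W rfl with ⟨B, C, hW, hY⟩ | ⟨l0, hrot, hY⟩ | ⟨r0, hrot, hY⟩
    · refine ⟨L, B, BinTree.node BinTree.leaf C, by rw [hY]; rfl, rfl,
        Relation.ReflTransGen.refl, ?_⟩
      rw [hW]
      show tamariLE (BinTree.node (plant B BinTree.leaf) C) (BinTree.node B C)
      simp only [plant_leaf]
      exact Relation.ReflTransGen.refl
    · exact ⟨l0, W, BinTree.leaf, by rw [hY]; rfl, rot_size hrot,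
        Relation.ReflTransGen.single hrot,
        by simp only [plant_leaf]; exact Relation.ReflTransGen.refl⟩
    · exact ⟨L, r0, BinTree.leaf, by rw [hY]; rfl, rfl, Relation.ReflTransGen.refl,
        by simp only [plant_leaf]; exact Relation.ReflTransGen.single hrot⟩
  | node l r ih =>
    intro L W Y h
    simp only [plant_node] at h
    rcases rot_inv h _ r rfl with ⟨B, C, hr, hY⟩ | ⟨l0, hrot, hY⟩ | ⟨r0, hrot, hY⟩
    · refine ⟨L, W, BinTree.node (BinTree.node l B) C, by rw [hY]; rfl, rfl,
        Relation.ReflTransGen.refl, ?_⟩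
      rw [hr]
      show tamariLE (BinTree.node (BinTree.node (plant W l) B) C)
        (BinTree.node (plant W l) (BinTree.node B C))
      exact Relation.ReflTransGen.single (Rot.base _ _ _)
    · obtain ⟨L2, W2, R2, hY2, hsz, hLE1, hLE2⟩ := ih L W l0 hrot
      refine ⟨L2, W2, BinTree.node R2 r, by rw [hY, hY2]; rfl, hsz, hLE1, ?_⟩
      show tamariLE (BinTree.node (plant W2 R2) r) (BinTree.node (plant W l) r)
      exact tamariLE_node hLE2 Relation.ReflTransGen.refl
    · refine ⟨L, W, BinTree.node l r0, by rw [hY]; rfl, rfl, Relation.ReflTransGen.refl, ?_⟩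
      show tamariLE (BinTree.node (plant W l) r0) (BinTree.node (plant W l) r)
      exact tamariLE_node Relation.ReflTransGen.refl (Relation.ReflTransGen.single hrot)

lemma tamari_decomp {T1 TL TR : BinTree} (h : tamariLE T1 (BinTree.node TL TR)) :
    ∃ L1 W R2, T1 = plant (BinTree.node L1 W) R2 ∧ L1.size = TL.size ∧
      tamariLE L1 TL ∧ tamariLE (plant W R2) TR := by
  induction h using Relation.ReflTransGen.head_induction_on with
  | refl =>
    exact ⟨TL, TR, BinTree.leaf, rfl, rfl, Relation.ReflTransGen.refl,
      by simp only [plant_leaf]; exact Relation.ReflTransGen.refl⟩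
  | head hrot _ ih =>
    obtain ⟨L1, W, R2, hEq, hsz, hLE1, hLE2⟩ := ih
    rename_i T1' T1'' _
    rw [hEq] at hrot
    obtain ⟨L2, W2, R2', hY, hsz2, hL2, hW2⟩ := rot_plant _ _ _ _ hrot
    exact ⟨L2, W2, R2', hY, by omega, hL2.trans hLE1, hW2.trans hLE2⟩



/-- The explicit description of `pairRel n T1 (node TL TR)` for a decomposed `T1`. -/
def Phi (TL TR L1 R1 : BinTree) (k : ℕ) (x y : ℕ) : Prop :=
  (x = y ∧ 1 ≤ x ∧ x ≤ TL.size + TR.size + 1) ∨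
  (1 ≤ x ∧ x ≤ TL.size ∧ 1 ≤ y ∧ y ≤ TL.size ∧ pairRel TL.size L1 TL x y) ∨
  (∃ x' y', x = x' + (TL.size + 1) ∧ y = y' + (TL.size + 1) ∧ pairRel TR.size R1 TR x' y') ∨
  (y = TL.size + 1 ∧ 1 ≤ x ∧ x < y) ∨
  (y = TL.size + 1 ∧ y < x ∧ x ≤ y + k)

lemma pairRel_cut {W R2 TR : BinTree} {x y : ℕ}
    (h : pairRel TR.size (plant W R2) TR x y) (hy : y ≤ W.size) : x ≤ W.size := by
  have step : ∀ a b : ℕ, (decRel (plant W R2) a b ∨ incRel TR a b) → b ≤ W.size →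
      a ≤ W.size := by
    rintro a b (⟨hlt, hs⟩ | ⟨hlt, hs⟩) hb
    · have hW : W.sub 0 a b := plant_sub_left R2 hs (by omega)
      have := sub_bounds hW; omega
    · omega
  rcases h with ⟨rfl, _⟩ | h
  · exact hy
  · induction h with
    | single h => exact step _ _ h hy
    | tail h1 h2 ih => exact ih (step _ _ h2 hy)

lemma pairRel_eq_phi (TL TR L1 W R2 : BinTree) (hL : L1.size = TL.size)
    (hRsz : W.size + R2.size = TR.size) (x y : ℕ) :
    pairRel (TL.size + TR.size + 1) (plant (BinTree.node L1 W) R2) (BinTree.node TL TR) x y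
      ↔ Phi TL TR L1 (plant W R2) W.size x y := by
  have hR1sz : (plant W R2).size = TR.size := by rw [plant_size]; omega
  have hMsz : (BinTree.node L1 W).size = TL.size + W.size + 1 := by simp [BinTree.size]; omega
  constructor
  · -- forward direction via genClos_ind
    refine genClos_ind (fun a h1 h2 => Or.inl ⟨rfl, h1, h2⟩) ?_ ?_
    · -- generators land in Phi
      rintro a b (⟨hlt, hs⟩ | ⟨hlt, hs⟩)
      · -- decRel of T1
        by_cases hb : b ≤ TL.size + W.size + 1
        · have hM : (BinTree.node L1 W).sub 0 a b := plant_sub_left R2 hs (by omega)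
          rcases hM with ⟨h1, h2, h3⟩ | hsL | hsW
          · refine Or.inr (Or.inr (Or.inr (Or.inr ⟨by omega, by omega, by omega⟩)))
          · have hbd := sub_bounds hsL
            refine Or.inr (Or.inl ⟨by omega, by omega, by omega, by omega, ?_⟩)
            exact genClos_single (Or.inl ⟨hlt, hsL⟩)
          · obtain ⟨hW0, ha1, hb1⟩ := sub_unshift hsW
            have hbd := sub_bounds hW0
            have hR1 : (plant W R2).sub 0 (a - (0 + L1.size + 1)) (b - (0 + L1.size + 1)) :=
              plant_sub_of_left R2 hW0
            refine Or.inr (Or.inr (Or.inl ⟨a - (TL.size + 1), b - (TL.size + 1), by omega,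
              by omega, genClos_single (Or.inl ⟨by omega, ?_⟩)⟩))
            have e1 : a - (TL.size + 1) = a - (0 + L1.size + 1) := by omega
            have e2 : b - (TL.size + 1) = b - (0 + L1.size + 1) := by omega
            rw [e1, e2]; exact hR1
        · -- both beyond the node L1 W block
          push_neg at hb
          have hsR2 : R2.sub (0 + (BinTree.node L1 W).size) a b :=
            plant_sub_right R2 hs (by omega)
          have hbd := sub_bounds hsR2
          have e : 0 + (BinTree.node L1 W).size = W.size + (TL.size + 1) := by omega
          rw [e] at hsR2
          have ea : a = (a - (TL.size + 1)) + (TL.size + 1) := by omega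
          have eb : b = (b - (TL.size + 1)) + (TL.size + 1) := by omega
          rw [ea, eb] at hsR2
          have hR2 : R2.sub W.size (a - (TL.size + 1)) (b - (TL.size + 1)) :=
            (sub_shift_iff R2 W.size (TL.size + 1) _ _).1 hsR2
          have hR1 : (plant W R2).sub 0 (a - (TL.size + 1)) (b - (TL.size + 1)) := by
            apply plant_sub_of_right
            simpa using hR2
          refine Or.inr (Or.inr (Or.inl ⟨a - (TL.size + 1), b - (TL.size + 1), by omega,
            by omega, genClos_single (Or.inl ⟨by omega, hR1⟩)⟩))
      · -- incRel of node TL TR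
        rcases hs with ⟨h1, h2, h3⟩ | hsL | hsR
        · exact Or.inr (Or.inr (Or.inr (Or.inl ⟨by omega, by omega, by omega⟩)))
        · have hbd := sub_bounds hsL
          exact Or.inr (Or.inl ⟨by omega, by omega, by omega, by omega,
            genClos_single (Or.inr ⟨hlt, hsL⟩)⟩)
        · obtain ⟨hT0, ha1, hb1⟩ := sub_unshift hsR
          have hbd := sub_bounds hT0
          refine Or.inr (Or.inr (Or.inl ⟨a - (TL.size + 1), b - (TL.size + 1), by omega,
            by omega, genClos_single (Or.inr ⟨by omega, ?_⟩)⟩))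
          have e1 : a - (TL.size + 1) = a - (0 + TL.size + 1) := by omega
          have e2 : b - (TL.size + 1) = b - (0 + TL.size + 1) := by omega
          rw [e1, e2]; exact hT0
    · -- Phi is transitive
      rintro a b c h1 h2
      rcases h1 with ⟨rfl, _, _⟩ | ⟨ha1, ha2, hb1, hb2, hp⟩ |
        ⟨x', y', rfl, rfl, hp⟩ | ⟨hb, hx1, hxy⟩ | ⟨hb, hxy, hxk⟩
      · exact h2
      · rcases h2 with ⟨rfl, _, _⟩ | ⟨_, _, hc1, hc2, hp2⟩ |
          ⟨x2, y2, hEq, rfl, hp2⟩ | ⟨hc, _, _⟩ | ⟨hc, hlt, _⟩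
        · exact Or.inr (Or.inl ⟨ha1, ha2, hb1, hb2, hp⟩)
        · exact Or.inr (Or.inl ⟨ha1, ha2, hc1, hc2, genClos_trans hp hp2⟩)
        · omega
        · exact Or.inr (Or.inr (Or.inr (Or.inl ⟨hc, ha1, by omega⟩)))
        · omega
      · have hsupp := pairRel_supp hR1sz rfl hp
        rcases h2 with ⟨rfl, _, _⟩ | ⟨h1', h2', _⟩ |
          ⟨x2, y2, hEq, rfl, hp2⟩ | ⟨hc, _, hlt⟩ | ⟨hc, hlt, hck⟩
        · exact Or.inr (Or.inr (Or.inl ⟨x', y', rfl, rfl, hp⟩))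
        · omega
        · have hx2 : x2 = y' := by omega
          subst hx2
          exact Or.inr (Or.inr (Or.inl ⟨x', y2, rfl, rfl, genClos_trans hp hp2⟩))
        · omega
        · have hy'k : y' ≤ W.size := by omega
          have hx'k : x' ≤ W.size := pairRel_cut hp hy'k
          exact Or.inr (Or.inr (Or.inr (Or.inr ⟨hc, by omega, by omega⟩)))
      · subst hb
        rcases h2 with ⟨rfl, _, _⟩ | ⟨h1', h2', _⟩ |
          ⟨x2, y2, hEq, rfl, hp2⟩ | ⟨hc, _, hlt⟩ | ⟨hc, hlt, _⟩
        · exact Or.inr (Or.inr (Or.inr (Or.inl ⟨rfl, hx1, hxy⟩)))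
        · omega
        · have hsupp := pairRel_supp hR1sz rfl hp2; omega
        · omega
        · omega
      · subst hb
        rcases h2 with ⟨rfl, _, _⟩ | ⟨h1', h2', _⟩ |
          ⟨x2, y2, hEq, rfl, hp2⟩ | ⟨hc, _, hlt⟩ | ⟨hc, hlt, _⟩
        · exact Or.inr (Or.inr (Or.inr (Or.inr ⟨rfl, hxy, hxk⟩)))
        · omega
        · have hsupp := pairRel_supp hR1sz rfl hp2; omega
        · omega
        · omega
  · -- reverse direction
    rintro (⟨rfl, h1, h2⟩ | ⟨ha1, ha2, hb1, hb2, hp⟩ |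
      ⟨x', y', rfl, rfl, hp⟩ | ⟨hb, hx1, hxy⟩ | ⟨hb, hxy, hxk⟩)
    · exact genClos_diag h1 h2
    · refine genClos_mono (by omega) ?_ hp
      rintro u v (⟨hlt, hs⟩ | ⟨hlt, hs⟩)
      · exact Or.inl ⟨hlt, plant_sub_of_left R2 (Or.inr (Or.inl hs))⟩
      · exact Or.inr ⟨hlt, Or.inr (Or.inl hs)⟩
    · refine genClos_shift (by omega) ?_ hp
      rintro u v (⟨hlt, hs⟩ | ⟨hlt, hs⟩)
      · -- decRel of R1 = plant W R2 lifts to decRel of T1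
        refine Or.inl ⟨by omega, ?_⟩
        by_cases hv : v ≤ W.size
        · have hW : W.sub 0 u v := plant_sub_left R2 hs (by omega)
          have hW' : W.sub (0 + L1.size + 1) (u + (TL.size + 1)) (v + (TL.size + 1)) := by
            have h2 := sub_shift (TL.size + 1) hW
            have e : 0 + L1.size + 1 = TL.size + 1 := by omega
            rw [e]
            exact h2
          exact plant_sub_of_left R2 (Or.inr (Or.inr hW'))
        · have hu : W.size < u := by
            have := sub_bounds hs; omega
          have hR2 : R2.sub W.size u v := by
            have := plant_sub_right R2 hs (by omega)
            simpa using this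
          have hR2' : R2.sub (W.size + (TL.size + 1)) (u + (TL.size + 1)) (v + (TL.size + 1)) :=
            (sub_shift_iff R2 W.size (TL.size + 1) u v).2 hR2
          apply plant_sub_of_right
          have e : 0 + (BinTree.node L1 W).size = W.size + (TL.size + 1) := by omega
          rw [e]
          exact hR2'
      · refine Or.inr ⟨by omega, ?_⟩
        have := sub_shift (TL.size + 1) hs
        refine Or.inr (Or.inr ?_)
        have e : 0 + TL.size + 1 = TL.size + 1 := by omega
        rw [e]
        exact this
    · subst hb
      refine genClos_single (Or.inr ⟨hxy, Or.inl ⟨by omega, by omega, by omega⟩⟩)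
    · subst hb
      refine genClos_single (Or.inl ⟨hxy, ?_⟩)
      refine plant_sub_of_left R2 (Or.inl ⟨by omega, by omega, by omega⟩)

lemma ip_ext {P Q : IntervalPoset} (hn : P.n = Q.n) (hr : P.rel = Q.rel) : P = Q := by
  cases P; cases Q
  simp only at hn hr
  subst hn; subst hr
  rfl

/-- transfer an interval-poset structure along a shifted restriction -/
def transferIP (P : IntervalPoset) (nn s : ℕ) (rel' : ℕ → ℕ → Prop)
    (hIff : ∀ a b, rel' a b ↔
      (1 ≤ a ∧ a ≤ nn ∧ 1 ≤ b ∧ b ≤ nn ∧ P.rel (a + s) (b + s)))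
    (hrefl : ∀ a, 1 ≤ a → a ≤ nn → rel' a a) : IntervalPoset where
  n := nn
  rel := rel'
  supp a b h := by rw [hIff] at h; exact ⟨h.1, h.2.1, h.2.2.1, h.2.2.2.1⟩
  refl := hrefl
  antisymm a b h1 h2 := by
    rw [hIff] at h1 h2
    have := P.antisymm _ _ h1.2.2.2.2 h2.2.2.2.2
    omega
  trans a b c h1 h2 := by
    rw [hIff] at h1 h2 ⊢
    exact ⟨h1.1, h1.2.1, h2.2.2.1, h2.2.2.2.1,
      P.trans _ _ _ h1.2.2.2.2 h2.2.2.2.2⟩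
  incCond a b c h hab hbc := by
    rw [hIff] at h ⊢
    refine ⟨by omega, by omega, h.2.2.1, h.2.2.2.1,
      P.incCond (a + s) (b + s) (c + s) h.2.2.2.2 (by omega) (by omega)⟩
  decCond a b c h hab hbc := by
    rw [hIff] at h ⊢
    refine ⟨by omega, by omega, h.2.2.1, h.2.2.2.1,
      P.decCond (a + s) (b + s) (c + s) h.2.2.2.2 (by omega) (by omega)⟩

@[simp] lemma transferIP_n (P nn s rel' hIff hrefl) :
    (transferIP P nn s rel' hIff hrefl).n = nn := rfl

@[simp] lemma transferIP_rel (P nn s rel' hIff hrefl) :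
    (transferIP P nn s rel' hIff hrefl).rel = rel' := rfl

lemma upper_to_comp {TL TR : BinTree} {P : IntervalPoset}
    (hP : P ∈ upperSet (BinTree.node TL TR)) :
    ∃ IL IR, IL ∈ upperSet TL ∧ IR ∈ upperSet TR ∧ P ∈ comp IL IR := by
  obtain ⟨hn, T1, hsz, hLE, hrel⟩ := hP
  obtain ⟨L1, W, R2, hEq, hL, hLE1, hLE2⟩ := tamari_decomp hLE
  have hTsz : (BinTree.node TL TR).size = TL.size + TR.size + 1 := by simp [BinTree.size]
  have hT1sz : T1.size = TL.size + TR.size + 1 := by rw [hsz, hTsz]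
  have hRsz : W.size + R2.size = TR.size := by
    rw [hEq, plant_size] at hT1sz
    simp [BinTree.size] at hT1sz
    omega
  have hR1sz : (plant W R2).size = TR.size := by rw [plant_size]; omega
  have hPhi : ∀ x y, P.rel x y ↔ Phi TL TR L1 (plant W R2) W.size x y := by
    intro x y
    rw [hrel, hTsz, hEq]
    exact pairRel_eq_phi TL TR L1 W R2 hL hRsz x y
  -- the left restriction
  have hIffL : ∀ a b, pairRel TL.size L1 TL a b ↔
      (1 ≤ a ∧ a ≤ TL.size ∧ 1 ≤ b ∧ b ≤ TL.size ∧ P.rel (a + 0) (b + 0)) := by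
    intro a b
    constructor
    · intro h
      have hb := pairRel_supp hL rfl h
      refine ⟨by omega, by omega, by omega, by omega, ?_⟩
      simp only [Nat.add_zero]
      rw [hPhi]
      exact Or.inr (Or.inl ⟨by omega, by omega, by omega, by omega, h⟩)
    · rintro ⟨h1, h2, h3, h4, h⟩
      simp only [Nat.add_zero] at h
      rw [hPhi] at h
      rcases h with ⟨rfl, _, _⟩ | ⟨_, _, _, _, hp⟩ | ⟨x', y', rfl, _, _⟩ |
        ⟨hb, _, _⟩ | ⟨hb, _, _⟩
      · exact genClos_diag h1 h2
      · exact hp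
      · omega
      · omega
      · omega
  have hIffR : ∀ a b, pairRel TR.size (plant W R2) TR a b ↔
      (1 ≤ a ∧ a ≤ TR.size ∧ 1 ≤ b ∧ b ≤ TR.size ∧
        P.rel (a + (TL.size + 1)) (b + (TL.size + 1))) := by
    intro a b
    constructor
    · intro h
      have hb := pairRel_supp hR1sz rfl h
      refine ⟨by omega, by omega, by omega, by omega, ?_⟩
      rw [hPhi]
      exact Or.inr (Or.inr (Or.inl ⟨a, b, rfl, rfl, h⟩))
    · rintro ⟨h1, h2, h3, h4, h⟩
      rw [hPhi] at h
      rcases h with ⟨he, _, _⟩ | ⟨_, hx, _, _, _⟩ | ⟨x', y', hx, hy, hp⟩ |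
        ⟨hb, _, _⟩ | ⟨hb, _, _⟩
      · have : a = b := by omega
        subst this
        exact genClos_diag h1 h2
      · omega
      · have hx' : x' = a := by omega
        have hy' : y' = b := by omega
        subst hx'; subst hy'
        exact hp
      · omega
      · omega
  refine ⟨transferIP P TL.size 0 (pairRel TL.size L1 TL) hIffL
      (fun a h1 h2 => show pairRel TL.size L1 TL a a from genClos_diag h1 h2),
    transferIP P TR.size (TL.size + 1) (pairRel TR.size (plant W R2) TR) hIffR
      (fun a h1 h2 => show pairRel TR.size (plant W R2) TR a a from genClos_diag h1 h2), ?_, ?_, ?_⟩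
  · exact ⟨rfl, L1, hL, hLE1, rfl⟩
  · exact ⟨rfl, plant W R2, hR1sz, hLE2, rfl⟩
  · refine ⟨?_, ?_, ?_, ?_, ?_⟩
    · simpa [hTsz] using hn
    · intro a b h1 h2 h3 h4
      rw [transferIP_rel, hIffL a b]
      simp only [transferIP_n] at h2 h4
      constructor
      · intro h
        exact ⟨h1, h2, h3, h4, by simpa using h⟩
      · rintro ⟨_, _, _, _, h⟩
        simpa using h
    · intro a b h1 h2 h3 h4
      rw [transferIP_rel, hIffR a b]
      simp only [transferIP_n] at h2 h4
      have e1 : a + (transferIP P TL.size 0 (pairRel TL.size L1 TL) hIffL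
          (fun a h1 h2 => show pairRel TL.size L1 TL a a from genClos_diag h1 h2)).n + 1 = a + (TL.size + 1) := by
        rw [transferIP_n]; omega
      have e2 : b + (transferIP P TL.size 0 (pairRel TL.size L1 TL) hIffL
          (fun a h1 h2 => show pairRel TL.size L1 TL a a from genClos_diag h1 h2)).n + 1 = b + (TL.size + 1) := by
        rw [transferIP_n]; omega
      rw [e1, e2]
      constructor
      · intro h
        exact ⟨h1, h2, h3, h4, h⟩
      · rintro ⟨_, _, _, _, h⟩
        exact h
    · intro i h1 h2
      simp only [transferIP_n] at h2 ⊢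
      rw [hPhi]
      exact Or.inr (Or.inr (Or.inr (Or.inl ⟨rfl, h1, by omega⟩)))
    · intro j hj h
      simp only [transferIP_n] at hj h
      rw [hPhi] at h
      rcases h with ⟨he, _, _⟩ | ⟨_, hx, _, _, _⟩ | ⟨x', y', hx, hy, hp⟩ |
        ⟨hb, _, hlt⟩ | ⟨hb, hlt, _⟩
      · omega
      · omega
      · have := pairRel_supp hR1sz rfl hp
        omega
      · omega
      · omega

lemma comp_to_upper {TL TR : BinTree} {IL IR I : IntervalPoset}
    (hIL : IL ∈ upperSet TL) (hIR : IR ∈ upperSet TR) (hI : I ∈ comp IL IR) :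
    I ∈ upperSet (BinTree.node TL TR) := by
  classical
  obtain ⟨hnL, L1, hL1sz, hLE1, hrelL⟩ := hIL
  obtain ⟨hnR, R1, hR1sz, hLE2, hrelR⟩ := hIR
  obtain ⟨hn, hcL, hcR, hbel, hnab⟩ := hI
  rw [hnL] at hcL hcR hbel hnab
  rw [hnR] at hcR
  have hIn : I.n = TL.size + TR.size + 1 := by omega
  -- the set of right elements hanging below TL.size + 1 is an interval
  have hD : ∃ km, km ≤ TR.size ∧
      ∀ b, TL.size + 1 < b → (I.rel b (TL.size + 1) ↔ b ≤ TL.size + 1 + km) := by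
    set S : Finset ℕ := (Finset.Ioc (TL.size + 1) (TL.size + 1 + TR.size)).filter
      (fun b => I.rel b (TL.size + 1)) with hS
    have hmemS : ∀ b, b ∈ S ↔ (TL.size + 1 < b ∧ b ≤ TL.size + 1 + TR.size ∧
        I.rel b (TL.size + 1)) := by
      intro b
      simp [hS, Finset.mem_filter, Finset.mem_Ioc]
      tauto
    by_cases hne : S.Nonempty
    · set d := S.max' hne with hd
      have hdS := S.max'_mem hne
      rw [hmemS] at hdS
      refine ⟨d - (TL.size + 1), by omega, ?_⟩
      intro b hb
      constructor
      · intro h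
        have hbS : b ∈ S := by
          rw [hmemS]
          have := I.supp _ _ h
          exact ⟨hb, by omega, h⟩
        have := S.le_max' b hbS
        omega
      · intro h
        rcases eq_or_lt_of_le (show b ≤ d by omega) with rfl | hlt
        · exact hdS.2.2
        · exact I.decCond (TL.size + 1) b d hdS.2.2 hb hlt
    · refine ⟨0, by omega, ?_⟩
      intro b hb
      constructor
      · intro h
        exfalso
        apply hne
        refine ⟨b, ?_⟩
        rw [hmemS]
        have := I.supp _ _ h
        exact ⟨hb, by omega, h⟩
      · omega
  obtain ⟨km, hkm, hDk⟩ := hD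
  -- cut the left spine of R1 at km
  have hcut : ∀ a b, b ≤ km → R1.sub 0 a b → a ≤ km := by
    intro a b hb hs
    rcases le_or_gt a b with h | h
    · omega
    · have hbd := sub_bounds hs
      have hIRr : IR.rel a b := by
        rw [hrelR]
        exact genClos_single (Or.inl ⟨h, hs⟩)
      have hI1 : I.rel (a + TL.size + 1) (b + TL.size + 1) :=
        (hcR a b (by omega) (by omega) (by omega) (by omega)).2 hIRr
      have hbm : I.rel (b + TL.size + 1) (TL.size + 1) := by
        rw [hDk (b + TL.size + 1) (by omega)]
        omega
      have ham : I.rel (a + TL.size + 1) (TL.size + 1) :=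
        I.trans _ _ _ hI1 hbm
      rw [hDk (a + TL.size + 1) (by omega)] at ham
      omega
  obtain ⟨W, R2, hEq, hW⟩ := spine_cut R1 km (by omega) hcut
  have hRsz : W.size + R2.size = TR.size := by
    rw [hEq, plant_size] at hR1sz
    omega
  have hTsz : (BinTree.node TL TR).size = TL.size + TR.size + 1 := by simp [BinTree.size]
  refine ⟨by rw [hTsz]; exact hIn, plant (BinTree.node L1 W) R2, ?_, ?_, ?_⟩
  · rw [plant_size, hTsz]
    simp [BinTree.size]
    omega
  · refine (tamariLE_plant L1 W R2).trans (tamariLE_node hLE1 ?_)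
    rw [← hEq]
    exact hLE2
  · funext x y
    apply propext
    rw [hTsz]
    rw [pairRel_eq_phi TL TR L1 W R2 hL1sz hRsz x y]
    rw [← hEq] at *
    constructor
    · -- I.rel → Phi
      intro h
      have hsupp := I.supp _ _ h
      rw [hIn] at hsupp
      rcases lt_trichotomy y (TL.size + 1) with hy | hy | hy
      · rcases lt_trichotomy x (TL.size + 1) with hx | hx | hx
        · have hILr := (hcL x y (by omega) (by omega) (by omega) (by omega)).1 h
          rw [hrelL] at hILr
          exact Or.inr (Or.inl ⟨by omega, by omega, by omega, by omega, hILr⟩)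
        · exfalso
          have hym : I.rel y (TL.size + 1) := hbel y (by omega) (by omega)
          rw [← hx] at hym
          have := I.antisymm _ _ h hym
          omega
        · exfalso
          have hmy : I.rel (TL.size + 1) y := I.decCond y (TL.size + 1) x h hy hx
          have hym : I.rel y (TL.size + 1) := hbel y (by omega) (by omega)
          have := I.antisymm _ _ hmy hym
          omega
      · rcases lt_trichotomy x (TL.size + 1) with hx | hx | hx
        · exact Or.inr (Or.inr (Or.inr (Or.inl ⟨hy, by omega, by omega⟩)))
        · exact Or.inl ⟨by omega, by omega, by omega⟩
        · rw [hy] at h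
          have := (hDk x hx).1 h
          exact Or.inr (Or.inr (Or.inr (Or.inr ⟨hy, by omega, by omega⟩)))
      · rcases lt_trichotomy x (TL.size + 1) with hx | hx | hx
        · exfalso
          have hmy : I.rel (TL.size + 1) y := I.incCond x (TL.size + 1) y h hx hy
          exact hnab y hy hmy
        · exfalso
          rw [← hx] at hnab
          exact hnab y (by omega) h
        · have ex : x = (x - (TL.size + 1)) + TL.size + 1 := by omega
          have ey : y = (y - (TL.size + 1)) + TL.size + 1 := by omega
          rw [ex, ey] at h
          have hIRr := (hcR (x - (TL.size + 1)) (y - (TL.size + 1)) (by omega) (by omega)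
            (by omega) (by omega)).1 h
          rw [hrelR] at hIRr
          exact Or.inr (Or.inr (Or.inl ⟨x - (TL.size + 1), y - (TL.size + 1), by omega,
            by omega, hIRr⟩))
    · -- Phi → I.rel
      rintro (⟨rfl, h1, h2⟩ | ⟨h1, h2, h3, h4, hp⟩ | ⟨x', y', rfl, rfl, hp⟩ |
        ⟨hb, h1, h2⟩ | ⟨hb, h1, h2⟩)
      · exact I.refl x h1 (by omega)
      · rw [← hrelL] at hp
        exact (hcL x y h1 h2 h3 h4).2 hp
      · rw [← hrelR] at hp
        have hsupp := IR.supp _ _ hp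
        rw [hnR] at hsupp
        have := (hcR x' y' (by omega) (by omega) (by omega) (by omega)).2 hp
        have e1 : x' + TL.size + 1 = x' + (TL.size + 1) := by omega
        have e2 : y' + TL.size + 1 = y' + (TL.size + 1) := by omega
        rw [e1, e2] at this
        exact this
      · subst hb
        exact hbel x h1 (by omega)
      · subst hb
        rw [hDk x (by omega)]
        omega

lemma comp_inj {TL TR : BinTree} {IL IL' IR IR' I : IntervalPoset}
    (hIL : IL ∈ upperSet TL) (hIL' : IL' ∈ upperSet TL)
    (hIR : IR ∈ upperSet TR) (hIR' : IR' ∈ upperSet TR)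
    (hI : I ∈ comp IL IR) (hI' : I ∈ comp IL' IR') : IL = IL' ∧ IR = IR' := by
  obtain ⟨hn, hcL, hcR, -, -⟩ := hI
  obtain ⟨hn', hcL', hcR', -, -⟩ := hI'
  have hnL : IL.n = TL.size := hIL.1
  have hnL' : IL'.n = TL.size := hIL'.1
  have hnR : IR.n = TR.size := hIR.1
  have hnR' : IR'.n = TR.size := hIR'.1
  constructor
  · refine ip_ext (by omega) ?_
    funext a b
    apply propext
    by_cases hab : 1 ≤ a ∧ a ≤ TL.size ∧ 1 ≤ b ∧ b ≤ TL.size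
    · rw [← hcL a b (by omega) (by omega) (by omega) (by omega),
        ← hcL' a b (by omega) (by omega) (by omega) (by omega)]
    · constructor
      · intro h
        have := IL.supp _ _ h
        omega
      · intro h
        have := IL'.supp _ _ h
        omega
  · refine ip_ext (by omega) ?_
    funext a b
    apply propext
    by_cases hab : 1 ≤ a ∧ a ≤ TR.size ∧ 1 ≤ b ∧ b ≤ TR.size
    · rw [← hcR a b (by omega) (by omega) (by omega) (by omega),
        ← hcR' a b (by omega) (by omega) (by omega) (by omega)]
      rw [hnL, hnL']
    · constructor
      · intro h
        have := IR.supp _ _ h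
        omega
      · intro h
        have := IR'.supp _ _ h
        omega

end TamariAux

/-- For `T = node TL TR`, `S_T` is the disjoint union of the compositions
`𝔹(IL, IR)` over `IL ∈ S_{TL}` and `IR ∈ S_{TR}`. -/
theorem stmt10 (TL TR : BinTree) :
    (upperSet (BinTree.node TL TR) =
      ⋃ IL ∈ upperSet TL, ⋃ IR ∈ upperSet TR, comp IL IR) ∧
    (∀ IL IL' IR IR', IL ∈ upperSet TL → IL' ∈ upperSet TL →
      IR ∈ upperSet TR → IR' ∈ upperSet TR → (IL ≠ IL' ∨ IR ≠ IR') →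
      Disjoint (comp IL IR) (comp IL' IR')) := by
  constructor
  · ext P
    simp only [Set.mem_iUnion, exists_prop]
    constructor
    · intro hP
      obtain ⟨IL, IR, hIL, hIR, hc⟩ := TamariAux.upper_to_comp hP
      exact ⟨IL, hIL, IR, hIR, hc⟩
    · rintro ⟨IL, hIL, IR, hIR, hc⟩
      exact TamariAux.comp_to_upper hIL hIR hc
  · intro IL IL' IR IR' h1 h2 h3 h4 hne
    rw [Set.disjoint_left]
    intro I hI hI'
    obtain ⟨hL, hR⟩ := TamariAux.comp_inj h1 h2 h3 h4 hI hI'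
    rcases hne with hne | hne
    · exact hne hL
    · exact hne hR
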